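/- For integers n > 1 and p with 1 < p < n and p | n, the sets A = { n^i : i ≥ 0 } and E = { n^{2i} } ∪ { n^{2i+1} } ∪ { n^{2i+1} p } are inequivalent under truncated division: there are no r, r' with A/r = E/r'. -/

import Mathlib

/-- `S/r`: the image of `S ⊆ ℕ` under truncated division `m ↦ m / gcd(r,m)`. -/
def truncDiv (S : Set ℕ) (r : ℕ) : Set ℕ := (fun m => m / Nat.gcd r m) '' S

/-- For `1 < p < n` with `p ∣ n`, the sets `A = {n^i}` and
`E = {n^{2i}} ∪ {n^{2i+1}} ∪ {n^{2i+1}·p}` are inequivalent under truncated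
division. -/
theorem depthProfiles_G1_G3_inequivalent (n p : ℕ) (hn : 1 < n) (hp : 1 < p)
    (hpn : p < n) (hdvd : p ∣ n) :
    ¬ ∃ r r' : ℕ, 0 < r ∧ 0 < r' ∧
      truncDiv {m | ∃ i : ℕ, m = n ^ i} r
        = truncDiv ({m | ∃ i : ℕ, m = n ^ (2 * i)}
            ∪ {m | ∃ i : ℕ, m = n ^ (2 * i + 1)}
            ∪ {m | ∃ i : ℕ, m = n ^ (2 * i + 1) * p}) r' := by
  rintro ⟨r, r', hr, hr', h⟩
  have hn0 : 0 < n := by omega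
  -- the sequence k ↦ gcd(r', n^k) is monotone under divisibility and bounded
  have hgpos : ∀ k : ℕ, 0 < Nat.gcd r' (n ^ k) := fun k => Nat.gcd_pos_of_pos_left _ hr'
  have hmono : ∀ k k' : ℕ, k ≤ k' → Nat.gcd r' (n ^ k) ∣ Nat.gcd r' (n ^ k') := by
    intro k k' hk
    exact Nat.dvd_gcd (Nat.gcd_dvd_left _ _)
      ((Nat.gcd_dvd_right _ _).trans (pow_dvd_pow n hk))
  have hbound : ∀ k : ℕ, Nat.gcd r' (n ^ k) ≤ r' := fun k =>
    Nat.le_of_dvd hr' (Nat.gcd_dvd_left _ _)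
  -- hence it is eventually constant
  obtain ⟨K, hK⟩ : ∃ K : ℕ, ∀ k, K ≤ k → Nat.gcd r' (n ^ k) = Nat.gcd r' (n ^ K) := by
    by_contra hc
    push_neg at hc
    have grow : ∀ t : ℕ, ∃ k, t + 1 ≤ Nat.gcd r' (n ^ k) := by
      intro t
      induction t with
      | zero => exact ⟨0, hgpos 0⟩
      | succ t ih =>
        obtain ⟨k, hk⟩ := ih
        obtain ⟨k', hk', hne⟩ := hc k
        have h1 := Nat.le_of_dvd (hgpos k') (hmono k k' hk')
        exact ⟨k', by omega⟩
    obtain ⟨k, hk⟩ := grow r'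
    have := hbound k
    omega
  set g := Nat.gcd r' (n ^ K) with hgdef
  have hg0 : 0 < g := hgpos K
  have hgr' : g ≤ r' := hbound K
  have hgdvd : ∀ k : ℕ, K ≤ k → g ∣ n ^ k := fun k hk =>
    (Nat.gcd_dvd_right r' (n ^ K)).trans (pow_dvd_pow n hk)
  -- the gcd with n^k * p is also eventually g
  have hgp : ∀ k : ℕ, K ≤ k → Nat.gcd r' (n ^ k * p) = g := by
    intro k hk
    apply Nat.dvd_antisymm
    · have h1 : n ^ k * p ∣ n ^ (k + 1) := by
        rw [pow_succ]; exact Nat.mul_dvd_mul_left _ hdvd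
      have h2 : Nat.gcd r' (n ^ k * p) ∣ Nat.gcd r' (n ^ (k + 1)) :=
        Nat.dvd_gcd (Nat.gcd_dvd_left _ _) ((Nat.gcd_dvd_right _ _).trans h1)
      rw [hK (k + 1) (by omega)] at h2
      exact h2
    · rw [← hK k hk]
      exact Nat.dvd_gcd (Nat.gcd_dvd_left _ _)
        ((Nat.gcd_dvd_right _ _).trans (dvd_mul_right _ p))
  set L := r + r' + 2 with hLdef
  set I := K + r' with hIdef
  set X : ℕ → ℕ := fun i => n ^ (2 * (I + i)) / g with hXdef
  have hdX : ∀ i : ℕ, g ∣ n ^ (2 * (I + i)) := fun i => hgdvd _ (by omega)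
  have hX1 : ∀ i : ℕ, 1 ≤ X i := by
    intro i
    have h1 : g ≤ n ^ (2 * (I + i)) := Nat.le_of_dvd (pow_pos hn0 _) (hdX i)
    exact (Nat.one_le_div_iff hg0).mpr h1
  have hXmul : ∀ i : ℕ, ∀ c : ℕ, X i * c = n ^ (2 * (I + i)) * c / g := by
    intro i c
    rw [mul_comm (n ^ (2 * (I + i))) c, Nat.mul_div_assoc c (hdX i), mul_comm]
  have hXsucc : ∀ i : ℕ, X (i + 1) = X i * (n * n) := by
    intro i
    rw [hXmul i (n * n), hXdef]
    simp only
    congr 1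
    ring
  set w : ℕ → ℕ := fun t => if t = 0 then 1 else if t = 1 then n else n * p with hwdef
  set ρ : ℕ → ℕ := fun m => X (m / 3) * w (m % 3) with hρdef
  -- ρ is strictly monotone
  have hρmono : StrictMono ρ := by
    apply strictMono_nat_of_lt_succ
    intro m
    rcases (by omega : m % 3 = 0 ∨ m % 3 = 1 ∨ m % 3 = 2) with h3 | h3 | h3
    · have e1 : (m + 1) / 3 = m / 3 := by omega
      have e2 : (m + 1) % 3 = 1 := by omega
      simp only [hρdef, hwdef, e1, e2, h3]
      norm_num
      exact (Nat.lt_mul_iff_one_lt_right (hX1 (m / 3))).mpr hn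
    · have e1 : (m + 1) / 3 = m / 3 := by omega
      have e2 : (m + 1) % 3 = 2 := by omega
      simp only [hρdef, hwdef, e1, e2, h3]
      norm_num
      exact mul_lt_mul_of_pos_left ((Nat.lt_mul_iff_one_lt_right hn0).mpr hp) (hX1 (m / 3))
    · have e1 : (m + 1) / 3 = m / 3 + 1 := by omega
      have e2 : (m + 1) % 3 = 0 := by omega
      simp only [hρdef, hwdef, e1, e2, h3]
      norm_num
      rw [hXsucc (m / 3)]
      exact mul_lt_mul_of_pos_left (mul_lt_mul_of_pos_left hpn hn0) (hX1 (m / 3))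
  -- every ρ m is an element of E/r', hence of A/r
  have hmem : ∀ m : ℕ, ∃ j : ℕ, n ^ j / Nat.gcd r (n ^ j) = ρ m := by
    intro m
    have hE : ρ m ∈ truncDiv ({m | ∃ i : ℕ, m = n ^ (2 * i)}
        ∪ {m | ∃ i : ℕ, m = n ^ (2 * i + 1)}
        ∪ {m | ∃ i : ℕ, m = n ^ (2 * i + 1) * p}) r' := by
      rcases (by omega : m % 3 = 0 ∨ m % 3 = 1 ∨ m % 3 = 2) with h3 | h3 | h3
      · refine ⟨n ^ (2 * (I + m / 3)), Or.inl (Or.inl ⟨I + m / 3, rfl⟩), ?_⟩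
        simp only
        rw [hK _ (by omega), hρdef]
        simp only [h3, hwdef]
        norm_num
        rfl
      · refine ⟨n ^ (2 * (I + m / 3) + 1), Or.inl (Or.inr ⟨I + m / 3, rfl⟩), ?_⟩
        simp only
        rw [hK _ (by omega), hρdef]
        simp only [h3, hwdef]
        norm_num
        rw [hXmul (m / 3) n, pow_succ]
      · refine ⟨n ^ (2 * (I + m / 3) + 1) * p, Or.inr ⟨I + m / 3, rfl⟩, ?_⟩
        simp only
        rw [hgp _ (by omega), hρdef]
        simp only [h3, hwdef]
        norm_num
        rw [hXmul (m / 3) (n * p), pow_succ, mul_assoc]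
    rw [← h] at hE
    obtain ⟨mm, ⟨j, rfl⟩, hval⟩ := hE
    exact ⟨j, hval⟩
  choose f hf using hmem
  have hr'n : r' ≤ n ^ r' :=
    le_trans (Nat.lt_two_pow_self (n := r')).le (Nat.pow_le_pow_left hn r')
  have hrn : r ≤ n ^ r :=
    le_trans (Nat.lt_two_pow_self (n := r)).le (Nat.pow_le_pow_left hn r)
  -- lower bound on f m
  have hlow : ∀ m : ℕ, 2 * K + r' ≤ f m := by
    intro m
    have hρ0 : ρ 0 = X 0 := by
      simp only [hρdef, hwdef]
      norm_num
    have h1 : X 0 ≤ ρ m := by rw [← hρ0]; exact hρmono.monotone (Nat.zero_le m)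
    have h2 : ρ m ≤ n ^ f m := by rw [← hf m]; exact Nat.div_le_self _ _
    have h3 : n ^ (2 * (I + 0)) ≤ n ^ f m * g := by
      calc n ^ (2 * (I + 0)) = X 0 * g := (Nat.div_mul_cancel (hdX 0)).symm
        _ ≤ n ^ f m * g := Nat.mul_le_mul_right g (le_trans h1 h2)
    have h4 : n ^ (2 * (I + 0)) ≤ n ^ (f m + r') := by
      calc n ^ (2 * (I + 0)) ≤ n ^ f m * g := h3
        _ ≤ n ^ f m * n ^ r' := Nat.mul_le_mul_left _ (le_trans hgr' hr'n)
        _ = n ^ (f m + r') := (pow_add n _ _).symm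
    have h5 := (Nat.pow_le_pow_iff_right hn).mp h4
    omega
  -- upper bound on f m
  have hup : ∀ m : ℕ, m < 3 * L → f m ≤ 2 * I + 2 * L + r := by
    intro m hm
    have hL1 : 1 ≤ L := by omega
    have h1 : ρ m ≤ ρ (3 * L - 1) := hρmono.monotone (by omega)
    have h2 : ρ (3 * L - 1) = X (L - 1) * (n * p) := by
      have e1 : (3 * L - 1) / 3 = L - 1 := by omega
      have e2 : (3 * L - 1) % 3 = 2 := by omega
      simp only [hρdef, hwdef, e1, e2]
      norm_num
    have h3 : n ^ f m = ρ m * Nat.gcd r (n ^ f m) := by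
      rw [← hf m]
      exact (Nat.div_mul_cancel (Nat.gcd_dvd_right _ _)).symm
    have hgcr : Nat.gcd r (n ^ f m) ≤ n ^ r :=
      le_trans (Nat.le_of_dvd hr (Nat.gcd_dvd_left _ _)) hrn
    have hXle : X (L - 1) ≤ n ^ (2 * (I + (L - 1))) := Nat.div_le_self _ _
    have h5 : n ^ f m ≤ n ^ (2 * (I + (L - 1))) * (n * n) * n ^ r := by
      calc n ^ f m = ρ m * Nat.gcd r (n ^ f m) := h3
        _ ≤ X (L - 1) * (n * p) * n ^ r := Nat.mul_le_mul (h2 ▸ h1) hgcr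
        _ ≤ n ^ (2 * (I + (L - 1))) * (n * n) * n ^ r := by
            apply Nat.mul_le_mul_right
            exact Nat.mul_le_mul hXle (Nat.mul_le_mul_left n (le_of_lt hpn))
    have h6 : n ^ f m ≤ n ^ (2 * (I + (L - 1)) + 2 + r) := by
      have e : n ^ (2 * (I + (L - 1)) + 2 + r) = n ^ (2 * (I + (L - 1))) * (n * n) * n ^ r := by
        ring
      rw [e]
      exact h5
    have h7 := (Nat.pow_le_pow_iff_right hn).mp h6
    omega
  -- the counting contradiction
  have hinj : Set.InjOn f (Finset.range (3 * L) : Finset ℕ) := by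
    intro a ha b hb hab
    have : ρ a = ρ b := by rw [← hf a, ← hf b, hab]
    exact hρmono.injective this
  have hmaps : ∀ m ∈ Finset.range (3 * L),
      f m ∈ Finset.Icc (2 * K + r') (2 * I + 2 * L + r) := by
    intro m hm
    simp only [Finset.mem_range] at hm
    exact Finset.mem_Icc.mpr ⟨hlow m, hup m hm⟩
  have hcard := Finset.card_le_card_of_injOn f hmaps hinj
  rw [Finset.card_range, Nat.card_Icc] at hcard
  omega
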